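/- Let $H$ be a real Hilbert space, $J : H \to \mathbb{R}$ a 1-strongly convex function with global minimizer $w^*$. Let $(w_t)_{t\ge1}$, $(g_t)_{t\ge1}$, $(h_t)_{t\ge1}$ be sequences in $H$ with $w_{t+1} = w_t - \eta_t g_t - \eta_t h_t$ where $\eta_t = 1/t$, and suppose there are constants $G, H_0, W, R \ge 0$ and nonnegative reals $(\beta_t)$ such that for all $t$: (i) $\langle w_t - w^*, g_t \rangle \ge J(w_t) - J(w^*) + \frac{1}{2}\|w_t - w^*\|^2$; (ii) $\|g_t + h_t\| \le G + H_0$; (iii) $\langle w_t - w^*, -h_t \rangle \le R W \beta_t$. Then $\frac{1}{T}\sum_{t=1}^{T} J(w_t) - J(w^*) \le \frac{(G+H_0)^2 (\log T + 1)}{2T} + \frac{WR}{T} \sum_{t=1}^{T} \beta_t$. -/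

import Mathlib

open RealInnerProductSpace

lemma harm_sum_le_aux (T : ℕ) (hT : 1 ≤ T) :
    ∑ t ∈ Finset.Icc 1 T, (1 : ℝ) / t ≤ Real.log T + 1 := by
  induction T with
  | zero => omega
  | succ n ih =>
    rcases Nat.lt_or_ge 1 (n + 1) with h1 | h1
    · have hn : 1 ≤ n := by omega
      have ihn := ih hn
      rw [Finset.sum_Icc_succ_top (by omega : 1 ≤ n + 1)]
      have hn0 : (0 : ℝ) < n := by exact_mod_cast hn
      have hlog := Real.log_le_sub_one_of_pos (show (0:ℝ) < (n:ℝ)/((n:ℝ)+1) by positivity)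
      rw [Real.log_div (ne_of_gt hn0) (by positivity)] at hlog
      have h2 : (n:ℝ)/((n:ℝ)+1) - 1 = -(1/((n:ℝ)+1)) := by field_simp; ring
      rw [h2] at hlog
      push_cast
      linarith
    · have : n = 0 := by omega
      subst this
      norm_num

theorem stmt_10 {E : Type*} [NormedAddCommGroup E] [InnerProductSpace ℝ E]
    [CompleteSpace E] (J : E → ℝ)
    (hstrong : ConvexOn ℝ Set.univ (fun w => J w - ‖w‖ ^ 2 / 2))
    (wstar : E) (hmin : ∀ v, J wstar ≤ J v)
    (w g h : ℕ → E) (G H0 W R : ℝ)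
    (hG : 0 ≤ G) (hH0 : 0 ≤ H0) (hW : 0 ≤ W) (hR : 0 ≤ R)
    (β : ℕ → ℝ) (hβ : ∀ t, 0 ≤ β t)
    (hupd : ∀ t : ℕ, 1 ≤ t → w (t + 1) = w t - ((1 : ℝ) / t) • g t - ((1 : ℝ) / t) • h t)
    (hi : ∀ t : ℕ, 1 ≤ t →
      ⟪w t - wstar, g t⟫ ≥ J (w t) - J wstar + ‖w t - wstar‖ ^ 2 / 2)
    (hii : ∀ t : ℕ, 1 ≤ t → ‖g t + h t‖ ≤ G + H0)
    (hiii : ∀ t : ℕ, 1 ≤ t → ⟪w t - wstar, -h t⟫ ≤ R * W * β t)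
    (T : ℕ) (hT : 1 ≤ T) :
    (1 / (T : ℝ)) * ∑ t ∈ Finset.Icc 1 T, J (w t) - J wstar ≤
      (G + H0) ^ 2 * (Real.log T + 1) / (2 * T)
        + W * R / T * ∑ t ∈ Finset.Icc 1 T, β t := by
  set D := G + H0 with hD
  have hD0 : 0 ≤ D := by positivity
  set a : ℕ → ℝ := fun t => ‖w t - wstar‖ ^ 2 with ha
  set f : ℕ → ℝ := fun t => ((t : ℝ) - 1) / 2 * a t with hf
  -- per-step bound
  have key : ∀ t : ℕ, 1 ≤ t →
      J (w t) - J wstar ≤ (f t - f (t + 1)) + D ^ 2 / 2 * (1 / t) + R * W * β t := by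
    intro t ht
    have htpos : (0 : ℝ) < t := by exact_mod_cast ht
    have hdiff : w (t + 1) - wstar = (w t - wstar) - ((1 : ℝ) / t) • (g t + h t) := by
      rw [hupd t ht, smul_add]; abel
    have hexp : a (t + 1)
        = a t - 2 * ((1 : ℝ) / t) * ⟪w t - wstar, g t + h t⟫
          + ((1 : ℝ) / t) ^ 2 * ‖g t + h t‖ ^ 2 := by
      simp only [ha]
      rw [hdiff, norm_sub_sq_real, real_inner_smul_right, norm_smul, mul_pow,
        Real.norm_eq_abs, sq_abs]
      ring
    have hnorm : ‖g t + h t‖ ^ 2 ≤ D ^ 2 := by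
      have := hii t ht
      nlinarith [norm_nonneg (g t + h t)]
    have hinner : ⟪w t - wstar, g t⟫
        = ⟪w t - wstar, g t + h t⟫ + ⟪w t - wstar, -h t⟫ := by
      rw [inner_neg_right, inner_add_right]; ring
    have h1 := hi t ht
    have h3 := hiii t ht
    have hfexp : f t - f (t + 1)
        = ((t : ℝ) - 1) / 2 * a t - (t : ℝ) / 2 * a (t + 1) := by
      simp only [hf]; push_cast; ring
    rw [hfexp]
    have htne : (t : ℝ) ≠ 0 := ne_of_gt htpos
    have hIeq : ⟪w t - wstar, g t + h t⟫
        = ((t : ℝ) / 2) * (a t - a (t + 1) + ((1:ℝ)/t) ^ 2 * ‖g t + h t‖ ^ 2) := by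
      have h2t : 2 * ((1 : ℝ) / t) * ⟪w t - wstar, g t + h t⟫
          = a t - a (t + 1) + ((1:ℝ)/t) ^ 2 * ‖g t + h t‖ ^ 2 := by
        linarith [hexp]
      rw [← h2t]; field_simp
    have hmul : ⟪w t - wstar, g t + h t⟫
        ≤ (t : ℝ) / 2 * (a t - a (t + 1)) + D ^ 2 / 2 * (1 / t) := by
      rw [hIeq]
      have hx : ((t:ℝ)/2) * (((1:ℝ)/t)^2 * ‖g t + h t‖^2)
          ≤ ((t:ℝ)/2) * (((1:ℝ)/t)^2 * D^2) :=
        mul_le_mul_of_nonneg_left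
          (mul_le_mul_of_nonneg_left hnorm (by positivity)) (by positivity)
      have heq : ((t:ℝ)/2) * (((1:ℝ)/t)^2 * D^2) = D^2/2*(1/(t:ℝ)) := by
        field_simp
      calc ((t:ℝ)/2) * (a t - a (t + 1) + ((1:ℝ)/t)^2 * ‖g t + h t‖^2)
          = (t:ℝ)/2 * (a t - a (t + 1)) + ((t:ℝ)/2) * (((1:ℝ)/t)^2 * ‖g t + h t‖^2) := by
            ring
        _ ≤ (t:ℝ)/2 * (a t - a (t + 1)) + D^2/2*(1/(t:ℝ)) := by linarith
    have hat : a t = ‖w t - wstar‖ ^ 2 := rfl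
    nlinarith [hmul, hinner, h1, h3]
  -- sum the per-step bounds
  have hsum : ∑ t ∈ Finset.Icc 1 T, (J (w t) - J wstar)
      ≤ ∑ t ∈ Finset.Icc 1 T,
          ((f t - f (t + 1)) + D ^ 2 / 2 * (1 / t) + R * W * β t) := by
    apply Finset.sum_le_sum
    intro t htmem
    exact key t (Finset.mem_Icc.mp htmem).1
  have htel : ∑ t ∈ Finset.Icc 1 T, (f t - f (t + 1)) = f 1 - f (T + 1) := by
    rw [← Finset.Ico_add_one_right_eq_Icc, Finset.sum_Ico_eq_sum_range]
    have : ∀ i ∈ Finset.range (T + 1 - 1), f (1 + i) - f (1 + i + 1)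
        = f (1 + i) - f (1 + (i + 1)) := by intro i _; rw [add_assoc]
    rw [Finset.sum_congr rfl this, Finset.sum_range_sub' (fun i => f (1 + i))]
    simp [Nat.add_comm]
  have hf1 : f 1 = 0 := by simp [hf]
  have hfT : 0 ≤ f (T + 1) := by
    simp only [hf]
    push_cast
    have h9 : ((T : ℝ) + 1 - 1) = (T : ℝ) := by ring
    rw [h9]
    positivity
  have hharm : ∑ t ∈ Finset.Icc 1 T, (1 : ℝ) / t ≤ Real.log T + 1 :=
    harm_sum_le_aux T hT
  have hS : ∑ t ∈ Finset.Icc 1 T, (J (w t) - J wstar)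
      ≤ D ^ 2 * (Real.log T + 1) / 2 + R * W * ∑ t ∈ Finset.Icc 1 T, β t := by
    rw [Finset.sum_add_distrib, Finset.sum_add_distrib, htel,
      ← Finset.mul_sum, ← Finset.mul_sum] at hsum
    have h6 : D ^ 2 / 2 * ∑ t ∈ Finset.Icc 1 T, (1:ℝ)/t
        ≤ D ^ 2 / 2 * (Real.log T + 1) :=
      mul_le_mul_of_nonneg_left hharm (by positivity)
    linarith
  have hTpos : (0 : ℝ) < T := by exact_mod_cast hT
  have hcard : (((Finset.Icc 1 T).card : ℕ) : ℝ) = T := by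
    rw [Nat.card_Icc]; push_cast; ring
  rw [Finset.sum_sub_distrib, Finset.sum_const, nsmul_eq_mul, hcard] at hS
  -- hS : ∑ J (w t) - T * J wstar ≤ X
  have hTne : (T : ℝ) ≠ 0 := ne_of_gt hTpos
  calc 1 / (T:ℝ) * ∑ x ∈ Finset.Icc 1 T, J (w x) - J wstar
      = (∑ x ∈ Finset.Icc 1 T, J (w x) - (T:ℝ) * J wstar) / T := by
        field_simp
    _ ≤ (D ^ 2 * (Real.log T + 1) / 2 + R * W * ∑ t ∈ Finset.Icc 1 T, β t) / T :=
        (div_le_div_iff_of_pos_right hTpos).mpr hS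
    _ = D ^ 2 * (Real.log T + 1) / (2 * T)
          + W * R / T * ∑ t ∈ Finset.Icc 1 T, β t := by
        field_simp
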